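/- Let N : ℤ^{2g} → ℕ be a semi-norm restricted to the lattice and suppose there exists ε ∈ {0,1}^{2g} such that N(a) ≡ ⟨ε, a⟩ (mod 2) for all a ∈ ℤ^{2g} (parity constraint from an intersection norm). Then any two vertices of the dual unit ball of (the extension of) N that lie in ℤ^{2g} are congruent modulo 2. -/

import Mathlib

namespace DBV

open Finset

/-- real point of a lattice point -/
def lat {n : ℕ} (a : Fin n → ℤ) : Fin n → ℝ := fun i => (a i : ℝ)

/-- bundled hypotheses on the slack function -/
structure Good (n : ℕ) (δ : Fin n → ℤ) (f : (Fin n → ℝ) → ℝ) : Prop where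
  sub : ∀ x y, f (x + y) ≤ f x + f y
  hom : ∀ t : ℝ, 0 ≤ t → ∀ x, f (t • x) = t * f x
  nonneg : ∀ x, 0 ≤ f x
  par : ∀ a : Fin n → ℤ, ∃ m : ℤ, f (lat a) = (m : ℝ) ∧ m % 2 = (∑ i, δ i * a i) % 2

variable {n : ℕ} {δ : Fin n → ℤ} {f : (Fin n → ℝ) → ℝ}

lemma Good.zero (hf : Good n δ f) : f 0 = 0 := by
  simpa using hf.hom 0 le_rfl 0

lemma Good.negsmul (hf : Good n δ f) {t : ℝ} (ht : t ≤ 0) (x : Fin n → ℝ) :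
    f (t • x) = (-t) * f (-x) := by
  have h : t • x = (-t) • (-x) := by simp
  rw [h, hf.hom (-t) (by linarith)]

/-- the Lipschitz-type constant -/
noncomputable def Cf (n : ℕ) (f : (Fin n → ℝ) → ℝ) : ℝ :=
  ∑ i, max (f (Pi.single i 1)) (f (-Pi.single i 1))

lemma Cf_nonneg (hf : Good n δ f) : 0 ≤ Cf n f :=
  Finset.sum_nonneg fun i _ => le_trans (hf.nonneg _) (le_max_left _ _)

lemma Good.single_le (hf : Good n δ f) (i : Fin n) (c : ℝ) :
    f (Pi.single i c) ≤ |c| * max (f (Pi.single i 1)) (f (-Pi.single i 1)) := by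
  rcases le_or_gt 0 c with hc | hc
  · have h : Pi.single i c = c • (Pi.single i (1:ℝ) : Fin n → ℝ) := by
      funext k; by_cases hk : k = i
      · subst hk; simp
      · simp [Pi.single_apply, hk]
    rw [h, hf.hom c hc, abs_of_nonneg hc]
    exact mul_le_mul_of_nonneg_left (le_max_left _ _) hc
  · have h : Pi.single i c = (-c) • (-(Pi.single i (1:ℝ) : Fin n → ℝ)) := by
      funext k; by_cases hk : k = i
      · subst hk; simp
      · simp [Pi.single_apply, hk]
    rw [h, hf.hom (-c) (by linarith), abs_of_neg hc]
    exact mul_le_mul_of_nonneg_left (le_max_right _ _) (by linarith)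

lemma Good.le_sum_abs (hf : Good n δ f) (z : Fin n → ℝ) :
    f z ≤ ∑ i, |z i| * max (f (Pi.single i 1)) (f (-Pi.single i 1)) := by
  have h := Finset.le_sum_of_subadditive f hf.zero.le hf.sub Finset.univ
    (fun i => Pi.single i (z i))
  rw [Finset.univ_sum_single] at h
  exact h.trans (Finset.sum_le_sum fun i _ => hf.single_le i (z i))

lemma Good.le_of_coords (hf : Good n δ f) {z : Fin n → ℝ} {η : ℝ}
    (hη : 0 ≤ η) (h : ∀ i, |z i| ≤ η) : f z ≤ η * Cf n f := by
  refine (hf.le_sum_abs z).trans ?_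
  rw [Cf, Finset.mul_sum]
  exact Finset.sum_le_sum fun i _ =>
    mul_le_mul_of_nonneg_right (h i) (le_trans (hf.nonneg _) (le_max_left _ _))

lemma Good.le_norm (hf : Good n δ f) (z : Fin n → ℝ) : f z ≤ ‖z‖ * Cf n f :=
  hf.le_of_coords (norm_nonneg z) fun i => by
    simpa using norm_le_pi_norm z i

lemma Good.continuous (hf : Good n δ f) : Continuous f := by
  have hlip : LipschitzWith (Real.toNNReal (Cf n f)) f := by
    apply LipschitzWith.of_dist_le_mul
    intro x y
    have h1 : f x - f y ≤ Cf n f * dist x y := by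
      have := hf.sub (x - y) y
      simp only [sub_add_cancel] at this
      have h2 := hf.le_norm (x - y)
      rw [dist_eq_norm]
      nlinarith [hf.nonneg (x - y)]
    have h2 : f y - f x ≤ Cf n f * dist x y := by
      have := hf.sub (y - x) x
      simp only [sub_add_cancel] at this
      have h2 := hf.le_norm (y - x)
      rw [dist_eq_norm, ← norm_neg]
      simp only [neg_sub]
      nlinarith [hf.nonneg (y - x)]
    rw [Real.dist_eq, Real.coe_toNNReal _ (Cf_nonneg hf)]
    rw [abs_sub_le_iff]; constructor <;> linarith [dist_nonneg (x := x) (y := y)]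
  exact hlip.continuous

/-- lattice values are naturals -/
lemma Good.nat_val (hf : Good n δ f) (a : Fin n → ℤ) :
    ∃ m : ℕ, f (lat a) = (m : ℝ) := by
  obtain ⟨m, hm, -⟩ := hf.par a
  have : 0 ≤ m := by
    have := hf.nonneg (lat a); rw [hm] at this; exact_mod_cast this
  exact ⟨m.toNat, by rw [hm]; exact_mod_cast (Int.toNat_of_nonneg this).symm⟩


/-- f vanishes (in both directions) on the span of a symmetric zero set -/
lemma Good.vanish (hf : Good n δ f) {S : Set (Fin n → ℝ)}
    (hS : ∀ x ∈ S, f x = 0 ∧ f (-x) = 0) :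
    ∀ v ∈ Submodule.span ℝ S, f v = 0 ∧ f (-v) = 0 := by
  intro v hv
  induction hv using Submodule.span_induction with
  | mem x hx => exact hS x hx
  | zero => simpa [hf.zero] using hf.zero
  | add x y hx hy ihx ihy =>
      constructor
      · refine le_antisymm ?_ (hf.nonneg _)
        calc f (x + y) ≤ f x + f y := hf.sub x y
        _ = 0 := by rw [ihx.1, ihy.1]; ring
      · refine le_antisymm ?_ (hf.nonneg _)
        have : -(x + y) = (-x) + (-y) := by ring
        rw [this]
        calc f (-x + -y) ≤ f (-x) + f (-y) := hf.sub _ _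
        _ = 0 := by rw [ihx.2, ihy.2]; ring
  | smul a x hx ihx =>
      rcases le_or_gt 0 a with ha | ha
      · constructor
        · rw [hf.hom a ha, ihx.1, mul_zero]
        · have : -(a • x) = a • (-x) := by simp
          rw [this, hf.hom a ha, ihx.2, mul_zero]
      · constructor
        · rw [hf.negsmul ha.le, ihx.2, mul_zero]
        · have : -(a • x) = (-a) • x := by simp
          rw [this, hf.hom (-a) (by linarith), ihx.1, mul_zero]

/-- simultaneous Dirichlet approximation by pigeonhole -/
lemma pigeon (y : Fin n → ℝ) {N : ℕ} (hN : 0 < N) :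
    ∃ (t : ℕ) (p : Fin n → ℤ), 1 ≤ t ∧ ∀ i, |(t : ℝ) * y i - (p i : ℝ)| < 1 / N := by
  classical
  have hNR : (0:ℝ) < N := by exact_mod_cast hN
  have hfl : ∀ (c : ℝ), 0 ≤ ⌊Int.fract c * N⌋ ∧ ⌊Int.fract c * N⌋ < N := by
    intro c
    constructor
    · exact Int.floor_nonneg.2 (mul_nonneg (Int.fract_nonneg c) hNR.le)
    · have h1 : Int.fract c < 1 := Int.fract_lt_one c
      have h2 : Int.fract c * N < N := by nlinarith [Int.fract_nonneg c]
      exact Int.floor_lt.2 (by exact_mod_cast h2)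
  set F : ℕ → Fin n → Fin N := fun k i =>
    ⟨(⌊Int.fract ((k : ℝ) * y i) * N⌋).toNat, by
      have := hfl ((k : ℝ) * y i); omega⟩ with hF
  obtain ⟨k, l, hkl, heq⟩ := Finite.exists_ne_map_eq_of_infinite F
  have key : ∀ k l : ℕ, k < l → F k = F l →
      ∃ (t : ℕ) (p : Fin n → ℤ), 1 ≤ t ∧ ∀ i, |(t : ℝ) * y i - (p i : ℝ)| < 1 / N := by
    intro k l hlt heq
    refine ⟨l - k, fun i => ⌊(l : ℝ) * y i⌋ - ⌊(k : ℝ) * y i⌋, by omega, fun i => ?_⟩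
    have hvals : F k i = F l i := congrFun heq i
    have hco : ⌊Int.fract ((k : ℝ) * y i) * N⌋ = ⌊Int.fract ((l : ℝ) * y i) * N⌋ := by
      have h1 : (F k i).val = (F l i).val := by rw [hvals]
      have h2 := hfl ((k : ℝ) * y i)
      have h3 := hfl ((l : ℝ) * y i)
      simp only [hF] at h1
      omega
    have hb : ∀ c d : ℝ, ⌊Int.fract c * N⌋ = ⌊Int.fract d * N⌋ →
        |Int.fract d - Int.fract c| < 1 / N := by
      intro c d hcd
      have h1 := Int.floor_le (Int.fract c * N)
      have h2 := Int.lt_floor_add_one (Int.fract c * N)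
      have h3 := Int.floor_le (Int.fract d * N)
      have h4 := Int.lt_floor_add_one (Int.fract d * N)
      rw [hcd] at h1 h2
      rw [abs_sub_lt_iff]
      constructor <;> rw [lt_div_iff₀ hNR] <;> nlinarith
    have hfr := hb _ _ hco
    have hcast : ((l - k : ℕ) : ℝ) = (l : ℝ) - (k : ℝ) := by
      push_cast [Nat.cast_sub hlt.le]; ring
    have hrew : ((l - k : ℕ) : ℝ) * y i - ((⌊(l : ℝ) * y i⌋ - ⌊(k : ℝ) * y i⌋ : ℤ) : ℝ)
        = Int.fract ((l : ℝ) * y i) - Int.fract ((k : ℝ) * y i) := by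
      rw [hcast, ← Int.self_sub_floor, ← Int.self_sub_floor]
      push_cast
      ring
    rw [hrew]
    exact hfr
  rcases hkl.lt_or_gt with h | h
  · exact key k l h heq
  · exact key l k h heq.symm

lemma Good.pos_of_not_mem (hf : Good n δ f)
    (hsymm : ∀ a : Fin n → ℤ, f (lat a) = 0 → f (-lat a) = 0)
    {y : Fin n → ℝ}
    (hy : y ∉ Submodule.span ℝ (lat '' {a : Fin n → ℤ | f (lat a) = 0 ∧ f (-lat a) = 0})) :
    0 < f y := by
  set V := Submodule.span ℝ (lat '' {a : Fin n → ℤ | f (lat a) = 0 ∧ f (-lat a) = 0}) with hVdef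
  rcases (hf.nonneg y).lt_or_eq with h | h
  · exact h
  exfalso
  apply hy
  have hclosed : IsClosed (V : Set (Fin n → ℝ)) := Submodule.closed_of_finiteDimensional V
  have hmem : y ∈ closure (V : Set (Fin n → ℝ)) := by
    rw [Metric.mem_closure_iff]
    intro ε hε
    obtain ⟨N, hNgt⟩ := exists_nat_gt (max (Cf n f + 1) (1/ε + 1))
    have hN1 : Cf n f + 1 < N := lt_of_le_of_lt (le_max_left _ _) hNgt
    have hN2 : 1/ε + 1 < N := lt_of_le_of_lt (le_max_right _ _) hNgt
    have hNpos : 0 < N := by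
      have := Cf_nonneg hf
      have : (0:ℝ) < N := by linarith
      exact_mod_cast this
    have hNR : (0:ℝ) < N := by exact_mod_cast hNpos
    obtain ⟨t, p, ht1, hp⟩ := pigeon y hNpos
    have htR : (1:ℝ) ≤ (t:ℝ) := by exact_mod_cast ht1
    have htpos : (0:ℝ) < (t:ℝ) := by linarith
    -- the lattice point p has small f-value
    have hsplit : lat p = (t:ℝ) • y + (lat p - (t:ℝ) • y) := by
      rw [add_sub_cancel]
    have hsmall : f (lat p - (t:ℝ) • y) ≤ (1/N) * Cf n f := by
      refine hf.le_of_coords (by positivity) fun i => ?_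
      have := (hp i).le
      calc |(lat p - (t:ℝ) • y) i| = |(t:ℝ) * y i - (p i : ℝ)| := by
            simp [lat, abs_sub_comm]
      _ ≤ 1/N := this
    have hlt1 : f (lat p) < 1 := by
      calc f (lat p) ≤ f ((t:ℝ) • y) + f (lat p - (t:ℝ) • y) := by
            nth_rewrite 1 [hsplit]; exact hf.sub _ _
      _ = (t:ℝ) * f y + f (lat p - (t:ℝ) • y) := by rw [hf.hom _ htpos.le]
      _ ≤ 0 + (1/N) * Cf n f := by rw [← h]; simpa using hsmall
      _ < 1 := by
            rw [zero_add]
            rw [div_mul_eq_mul_div, div_lt_one hNR]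
            linarith [Cf_nonneg hf]
    obtain ⟨m, hm⟩ := hf.nat_val p
    have hm0 : f (lat p) = 0 := by
      rw [hm] at hlt1 ⊢
      have : m = 0 := by exact_mod_cast Nat.lt_one_iff.1 (by exact_mod_cast hlt1)
      simp [this]
    have hpW : p ∈ {a : Fin n → ℤ | f (lat a) = 0 ∧ f (-lat a) = 0} := ⟨hm0, hsymm p hm0⟩
    refine ⟨(t:ℝ)⁻¹ • lat p, ?_, ?_⟩
    · exact Submodule.smul_mem V _ (Submodule.subset_span ⟨p, hpW, rfl⟩)
    · have hyb : y - (t:ℝ)⁻¹ • lat p = (t:ℝ)⁻¹ • ((t:ℝ) • y - lat p) := by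
        rw [smul_sub, inv_smul_smul₀ (ne_of_gt htpos)]
      have hnorm : ‖(t:ℝ) • y - lat p‖ ≤ 1/N := by
        rw [pi_norm_le_iff_of_nonneg (by positivity)]
        intro i
        have := (hp i).le
        calc ‖((t:ℝ) • y - lat p) i‖ = |(t:ℝ) * y i - (p i : ℝ)| := by
              simp [lat, Real.norm_eq_abs]
        _ ≤ 1/N := this
      calc dist y ((t:ℝ)⁻¹ • lat p) = ‖y - (t:ℝ)⁻¹ • lat p‖ := dist_eq_norm _ _
      _ = |(t:ℝ)⁻¹| * ‖(t:ℝ) • y - lat p‖ := by rw [hyb, norm_smul, Real.norm_eq_abs]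
      _ ≤ 1 * (1/N) := by
            refine mul_le_mul ?_ hnorm (norm_nonneg _) zero_le_one
            rw [abs_of_pos (by positivity)]
            have h := (div_le_one htpos).2 htR
            rwa [one_div] at h
      _ < ε := by
            rw [one_mul]
            rw [div_lt_iff₀ hNR]
            have hinv : ε * (1/ε) = 1 := by field_simp
            nlinarith [hε]
  rw [hclosed.closure_eq] at hmem
  exact hmem

lemma Good.terminal (hf : Good n δ f)
    (hsymm : ∀ a : Fin n → ℤ, f (lat a) = 0 → f (-lat a) = 0) :
    (∀ i, δ i % 2 = 0) ∨ ∃ ψ : Fin n → ℝ, ψ ≠ 0 ∧ ∀ x, |∑ i, ψ i * x i| ≤ f x := by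
  classical
  set W : Set (Fin n → ℤ) := {a | f (lat a) = 0 ∧ f (-lat a) = 0} with hWdef
  set V := Submodule.span ℝ (lat '' W) with hVdef
  have hSzero : ∀ x ∈ lat '' W, f x = 0 ∧ f (-x) = 0 := by
    rintro x ⟨a, ha, rfl⟩; exact ha
  by_cases hV : V = ⊤
  · left
    intro i
    have hall : ∀ x, f x = 0 := fun x =>
      (hf.vanish hSzero x (by rw [← hVdef, hV]; exact Submodule.mem_top)).1
    obtain ⟨m, hm, hp⟩ := hf.par (Pi.single i 1)
    have hm0 : m = 0 := by
      rw [hall] at hm; exact_mod_cast hm.symm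
    rw [hm0] at hp
    have hs : (∑ j, δ j * (Pi.single i 1 : Fin n → ℤ) j) = δ i := by
      simp [Pi.single_apply]
    rw [hs] at hp
    omega
  · right
    obtain ⟨U, hUc⟩ := Submodule.exists_isCompl V
    have hUne : U ≠ ⊥ := by
      intro hU
      apply hV
      have := hUc.sup_eq_top
      rwa [hU, sup_bot_eq] at this
    obtain ⟨u₀, hu₀U, hu₀⟩ := (Submodule.ne_bot_iff U).1 hUne
    set πU : (Fin n → ℝ) →ₗ[ℝ] (Fin n → ℝ) :=
      U.subtype.comp (U.projectionOnto V hUc.symm) with hπdef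
    have hπUmem : ∀ x, πU x ∈ U := fun x => Submodule.coe_mem _
    have hπV : ∀ v ∈ V, πU v = 0 := by
      intro v hv
      have := Submodule.linearProjOfIsCompl_apply_right hUc.symm ⟨v, hv⟩
      simp only [hπdef, LinearMap.comp_apply]
      rw [this]
      simp
    have hπU : ∀ u ∈ U, πU u = u := by
      intro u hu
      have := Submodule.linearProjOfIsCompl_apply_left (p := U) (q := V) hUc.symm ⟨u, hu⟩
      simp only [hπdef, LinearMap.comp_apply]
      rw [this]
      rfl
    have hdecomp : ∀ x, x - πU x ∈ V := by
      intro x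
      have h := Submodule.projection_add_projection_eq_self hUc x
      have h' : (V.projectionOnto U hUc x : Fin n → ℝ) + πU x = x := h
      have : x - πU x = (V.projectionOnto U hUc x : Fin n → ℝ) :=
        (eq_sub_of_add_eq h').symm
      rw [this]
      exact Submodule.coe_mem _
    have hfinv : ∀ x, f x = f (πU x) := by
      intro x
      have hv := hf.vanish hSzero _ (hdecomp x)
      have h1 : f x ≤ f (πU x) := by
        have : x = (x - πU x) + πU x := by abel
        nth_rewrite 1 [this]
        calc f ((x - πU x) + πU x) ≤ f (x - πU x) + f (πU x) := hf.sub _ _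
        _ = f (πU x) := by rw [hv.1, zero_add]
      have h2 : f (πU x) ≤ f x := by
        have : πU x = x + (-(x - πU x)) := by abel
        nth_rewrite 1 [this]
        calc f (x + (-(x - πU x))) ≤ f x + f (-(x - πU x)) := hf.sub _ _
        _ = f x := by rw [hv.2, add_zero]
      exact le_antisymm h1 h2
    -- compact minimum on the unit sphere of U
    set K : Set (Fin n → ℝ) := Metric.sphere 0 1 ∩ (U : Set (Fin n → ℝ)) with hKdef
    have hKcpt : IsCompact K :=
      (isCompact_sphere 0 1).inter_right (Submodule.closed_of_finiteDimensional U)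
    have hu₀n : ‖u₀‖ ≠ 0 := by simpa using hu₀
    have hKne : K.Nonempty := by
      refine ⟨‖u₀‖⁻¹ • u₀, ?_, Submodule.smul_mem U _ hu₀U⟩
      simp [norm_smul, inv_mul_cancel₀ hu₀n]
    obtain ⟨xm, hxmK, hmin⟩ := hKcpt.exists_isMinOn hKne hf.continuous.continuousOn
    rw [isMinOn_iff] at hmin
    have hxmV : xm ∉ V := by
      intro hxm
      have : xm = 0 := (Submodule.disjoint_def.1 hUc.disjoint) xm hxm hxmK.2
      have hn := hxmK.1
      rw [this] at hn
      simp at hn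
    have hc₁ : 0 < f xm := hf.pos_of_not_mem hsymm hxmV
    set c₁ := f xm with hc₁def
    -- the key bound
    have hbound : ∀ x, c₁ * ‖πU x‖ ≤ f x := by
      intro x
      by_cases hz : πU x = 0
      · rw [hz]; simp [hf.nonneg x]
      · have hnz : ‖πU x‖ ≠ 0 := by simpa using hz
        have hunit : ‖πU x‖⁻¹ • πU x ∈ K := by
          refine ⟨?_, Submodule.smul_mem U _ (hπUmem x)⟩
          simp [norm_smul, inv_mul_cancel₀ hnz]
        have hmin' := hmin _ hunit
        have heq : f (πU x) = ‖πU x‖ * f (‖πU x‖⁻¹ • πU x) := by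
          rw [← hf.hom _ (norm_nonneg (πU x)), smul_smul, mul_inv_cancel₀ hnz, one_smul]
        calc c₁ * ‖πU x‖ = ‖πU x‖ * c₁ := mul_comm _ _
        _ ≤ ‖πU x‖ * f (‖πU x‖⁻¹ • πU x) :=
            mul_le_mul_of_nonneg_left hmin' (norm_nonneg _)
        _ = f (πU x) := heq.symm
        _ = f x := (hfinv x).symm
    -- build the functional
    obtain ⟨i₀, hi₀⟩ := Function.ne_iff.1 hu₀
    simp only [Pi.zero_apply] at hi₀
    have hsum : ∀ x : Fin n → ℝ,
        ∑ j, (c₁ * πU (Pi.single j 1) i₀) * x j = c₁ * πU x i₀ := by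
      intro x
      have hx : ∑ j, x j • (Pi.single j (1:ℝ) : Fin n → ℝ) = x := by
        have h1 := Finset.univ_sum_single x
        rw [← h1]
        refine Finset.sum_congr rfl fun j _ => ?_
        funext k
        by_cases hk : k = j <;> simp [Pi.single_apply, hk]
      have h2 : πU x i₀ = ∑ j, x j * πU (Pi.single j 1) i₀ := by
        conv_lhs => rw [← hx]
        rw [map_sum, Finset.sum_apply]
        refine Finset.sum_congr rfl fun j _ => ?_
        rw [map_smul]
        simp
      rw [h2, Finset.mul_sum]
      refine Finset.sum_congr rfl fun j _ => by ring
    refine ⟨fun j => c₁ * πU (Pi.single j 1) i₀, ?_, ?_⟩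
    · intro h0
      have h1 := hsum u₀
      have h2 : ∀ j, (c₁ * πU (Pi.single j 1) i₀) = 0 := fun j => congrFun h0 j
      rw [hπU u₀ hu₀U] at h1
      have h3 : (0:ℝ) = c₁ * u₀ i₀ := by
        rw [← h1]
        refine (Finset.sum_eq_zero fun j _ => ?_).symm
        rw [h2 j, zero_mul]
      exact (mul_ne_zero (ne_of_gt hc₁) hi₀) h3.symm
    · intro x
      rw [hsum x, abs_mul, abs_of_pos hc₁]
      have h1 : |πU x i₀| ≤ ‖πU x‖ := by
        simpa [Real.norm_eq_abs] using norm_le_pi_norm (πU x) i₀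
      exact (mul_le_mul_of_nonneg_left h1 hc₁.le).trans (hbound x)

lemma Good.delta_even_of_top (hf : Good n δ f)
    (hV : Submodule.span ℝ
      (lat '' {a : Fin n → ℤ | f (lat a) = 0 ∧ f (-lat a) = 0}) = ⊤) :
    ∀ i, δ i % 2 = 0 := by
  classical
  intro i
  have hSzero : ∀ x ∈ lat '' {a : Fin n → ℤ | f (lat a) = 0 ∧ f (-lat a) = 0},
      f x = 0 ∧ f (-x) = 0 := by
    rintro x ⟨a, ha, rfl⟩; exact ha
  have hall : ∀ x, f x = 0 := fun x =>
    (hf.vanish hSzero x (by rw [hV]; exact Submodule.mem_top)).1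
  obtain ⟨m, hm, hp⟩ := hf.par (Pi.single i 1)
  have hm0 : m = 0 := by rw [hall] at hm; exact_mod_cast hm.symm
  rw [hm0] at hp
  have hs : (∑ j, δ j * (Pi.single i 1 : Fin n → ℤ) j) = δ i := by
    simp [Pi.single_apply]
  rw [hs] at hp
  omega

lemma Good.step (hf : Good n δ f) {x₀ : Fin n → ℤ} (h0 : f (lat x₀) = 0) :
    ∃ g : (Fin n → ℝ) → ℝ, Good n δ g ∧ (∀ x, g x ≤ f x) ∧ g (-lat x₀) = 0 := by
  classical
  set y₀ := lat x₀ with hy₀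
  set g : (Fin n → ℝ) → ℝ :=
    fun x => sInf ((fun t : ℝ => f (t • y₀ + x)) '' Set.Ici (0:ℝ)) with hgdef
  have hne : ∀ x, ((fun t : ℝ => f (t • y₀ + x)) '' Set.Ici (0:ℝ)).Nonempty :=
    fun x => ⟨f ((0:ℝ) • y₀ + x), ⟨0, Set.self_mem_Ici, rfl⟩⟩
  have hbdd : ∀ x, BddBelow ((fun t : ℝ => f (t • y₀ + x)) '' Set.Ici (0:ℝ)) :=
    fun x => ⟨0, by rintro r ⟨t, ht, rfl⟩; exact hf.nonneg _⟩
  have hle : ∀ x, ∀ t : ℝ, 0 ≤ t → g x ≤ f (t • y₀ + x) :=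
    fun x t ht => csInf_le (hbdd x) ⟨t, ht, rfl⟩
  have hge : ∀ x c, (∀ t : ℝ, 0 ≤ t → c ≤ f (t • y₀ + x)) → c ≤ g x :=
    fun x c hc => le_csInf (hne x) (by rintro r ⟨t, ht, rfl⟩; exact hc t ht)
  have hgf : ∀ x, g x ≤ f x := fun x => by
    have := hle x 0 le_rfl; simpa using this
  have hg0 : ∀ x, 0 ≤ g x := fun x => hge x 0 fun t ht => hf.nonneg _
  have hmono : ∀ x, ∀ s t : ℝ, 0 ≤ s → s ≤ t → f (t • y₀ + x) ≤ f (s • y₀ + x) := by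
    intro x s t hs hst
    have hsplit : t • y₀ + x = (t - s) • y₀ + (s • y₀ + x) := by
      rw [sub_smul]; abel
    rw [hsplit]
    calc f ((t-s) • y₀ + (s • y₀ + x)) ≤ f ((t-s) • y₀) + f (s • y₀ + x) := hf.sub _ _
    _ = (t-s) * f y₀ + f (s • y₀ + x) := by rw [hf.hom _ (by linarith)]
    _ = f (s • y₀ + x) := by rw [h0]; ring
  have hsub : ∀ x y, g (x + y) ≤ g x + g y := by
    intro x y
    refine le_of_forall_pos_le_add ?_
    intro ε hε
    obtain ⟨r, hrS, hr⟩ := Real.lt_sInf_add_pos (hne x) (half_pos hε)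
    obtain ⟨t, ht, rfl⟩ := hrS
    obtain ⟨r', hrS', hr'⟩ := Real.lt_sInf_add_pos (hne y) (half_pos hε)
    obtain ⟨s, hs, rfl⟩ := hrS'
    have hrx : f (t • y₀ + x) < g x + ε/2 := hr
    have hry : f (s • y₀ + y) < g y + ε/2 := hr'
    have hsplit : (t + s) • y₀ + (x + y) = (t • y₀ + x) + (s • y₀ + y) := by
      rw [add_smul]; abel
    have h1 : g (x + y) ≤ f ((t+s) • y₀ + (x+y)) :=
      hle _ _ (by simp only [Set.mem_Ici] at ht hs; linarith)
    rw [hsplit] at h1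
    have h2 := hf.sub (t • y₀ + x) (s • y₀ + y)
    linarith
  have hscale : ∀ c : ℝ, 0 < c → ∀ x, g (c • x) ≤ c * g x := by
    intro c hc x
    have h1 : c⁻¹ * g (c • x) ≤ g x := by
      refine hge x _ fun t ht => ?_
      have h2 : g (c • x) ≤ f ((c * t) • y₀ + c • x) := hle _ _ (by positivity)
      have h3 : (c * t) • y₀ + c • x = c • (t • y₀ + x) := by
        rw [smul_add, smul_smul]
      rw [h3, hf.hom c hc.le] at h2
      calc c⁻¹ * g (c • x) ≤ c⁻¹ * (c * f (t • y₀ + x)) :=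
            mul_le_mul_of_nonneg_left h2 (by positivity)
      _ = f (t • y₀ + x) := by field_simp
    calc g (c • x) = c * (c⁻¹ * g (c • x)) := by field_simp
    _ ≤ c * g x := mul_le_mul_of_nonneg_left h1 hc.le
  have hhom : ∀ t : ℝ, 0 ≤ t → ∀ x, g (t • x) = t * g x := by
    intro t ht x
    rcases eq_or_lt_of_le ht with h | h
    · rw [← h, zero_smul, zero_mul]
      refine le_antisymm ?_ (hg0 0)
      calc g 0 ≤ f 0 := hgf 0
      _ = 0 := hf.zero
    · refine le_antisymm (hscale t h x) ?_
      have h2 := hscale t⁻¹ (by positivity) (t • x)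
      rw [inv_smul_smul₀ (ne_of_gt h)] at h2
      calc t * g x ≤ t * (t⁻¹ * g (t • x)) := mul_le_mul_of_nonneg_left h2 h.le
      _ = g (t • x) := by field_simp
  have hpar : ∀ a : Fin n → ℤ, ∃ m : ℤ, g (lat a) = (m:ℝ) ∧ m % 2 = (∑ i, δ i * a i) % 2 := by
    intro a
    set b : ℕ → (Fin n → ℤ) := fun k => (fun i => (k : ℤ) * x₀ i + a i) with hb
    have hlatb : ∀ k : ℕ, lat (b k) = (k : ℝ) • y₀ + lat a := by
      intro k
      funext i
      simp only [hb, lat, hy₀, Pi.add_apply, Pi.smul_apply, smul_eq_mul]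
      push_cast
      ring
    have hSne : ∃ m : ℕ, ∃ k : ℕ, f (lat (b k)) = (m : ℝ) := by
      obtain ⟨m, hm⟩ := hf.nat_val (b 0)
      exact ⟨m, 0, hm⟩
    set m₀ := Nat.find hSne with hm₀def
    obtain ⟨k₀, hk₀⟩ := Nat.find_spec hSne
    have hgeq : g (lat a) = (m₀ : ℝ) := by
      refine le_antisymm ?_ ?_
      · have h1 := hle (lat a) (k₀ : ℝ) (by positivity)
        rw [← hlatb k₀] at h1
        rw [hk₀] at h1
        exact h1
      · refine hge _ _ fun t ht => ?_
        have hup : f ((⌈t⌉₊ : ℝ) • y₀ + lat a) ≤ f (t • y₀ + lat a) :=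
          hmono (lat a) t (⌈t⌉₊ : ℝ) ht (Nat.le_ceil t)
        obtain ⟨m', hm'⟩ := hf.nat_val (b ⌈t⌉₊)
        have hmin' : m₀ ≤ m' := Nat.find_min' hSne ⟨⌈t⌉₊, hm'⟩
        rw [hlatb] at hm'
        calc (m₀:ℝ) ≤ (m':ℝ) := by exact_mod_cast hmin'
        _ = f ((⌈t⌉₊ : ℝ) • y₀ + lat a) := hm'.symm
        _ ≤ f (t • y₀ + lat a) := hup
    obtain ⟨m'', hm'', hp''⟩ := hf.par (b k₀)
    have hm2 : m'' = (m₀ : ℤ) := by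
      have : (m'' : ℝ) = (m₀ : ℝ) := by rw [← hm'', hk₀]
      exact_mod_cast this
    obtain ⟨me, hme, hpe⟩ := hf.par x₀
    have hme0 : me = 0 := by
      rw [h0] at hme
      exact_mod_cast hme.symm
    have hE : (∑ i, δ i * x₀ i) % 2 = 0 := by omega
    have hsum : (∑ i, δ i * b k₀ i) = (k₀:ℤ) * (∑ i, δ i * x₀ i) + ∑ i, δ i * a i := by
      rw [Finset.mul_sum, ← Finset.sum_add_distrib]
      refine Finset.sum_congr rfl fun i _ => ?_
      simp only [hb]
      ring
    refine ⟨(m₀ : ℤ), by exact_mod_cast hgeq, ?_⟩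
    rw [hsum] at hp''
    have hdvd : (2:ℤ) ∣ (k₀:ℤ) * (∑ i, δ i * x₀ i) := Dvd.dvd.mul_left (by omega) _
    omega
  refine ⟨g, ⟨hsub, hhom, hg0, hpar⟩, hgf, ?_⟩
  refine le_antisymm ?_ (hg0 _)
  have h1 := hle (-y₀) 1 zero_le_one
  have h2 : (1:ℝ) • y₀ + (-y₀) = 0 := by rw [one_smul]; abel
  rw [h2, hf.zero] at h1
  exact h1

lemma key (δ : Fin n → ℤ) : ∀ (d : ℕ) (f : (Fin n → ℝ) → ℝ), Good n δ f →
    n ≤ d + Module.finrank ℝ (Submodule.span ℝ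
      (lat '' {a : Fin n → ℤ | f (lat a) = 0 ∧ f (-lat a) = 0})) →
    (∀ i, δ i % 2 = 0) ∨ ∃ ψ : Fin n → ℝ, ψ ≠ 0 ∧ ∀ x, |∑ i, ψ i * x i| ≤ f x := by
  intro d
  induction d with
  | zero =>
    intro f hf hrank
    left
    refine hf.delta_even_of_top ?_
    apply Submodule.eq_top_of_finrank_eq
    have h1 := Submodule.finrank_le (Submodule.span ℝ
      (lat '' {a : Fin n → ℤ | f (lat a) = 0 ∧ f (-lat a) = 0}))
    have h2 : Module.finrank ℝ (Fin n → ℝ) = n := by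
      simp [Module.finrank_pi]
    omega
  | succ d ih =>
    intro f hf hrank
    by_cases hex : ∃ a : Fin n → ℤ, f (lat a) = 0 ∧ f (-lat a) ≠ 0
    · obtain ⟨x₀, hx₀, hx₀'⟩ := hex
      obtain ⟨g, hg, hgle, hgneg⟩ := hf.step hx₀
      have hW : {a : Fin n → ℤ | f (lat a) = 0 ∧ f (-lat a) = 0} ⊆
          {a : Fin n → ℤ | g (lat a) = 0 ∧ g (-lat a) = 0} := by
        rintro a ⟨h1, h2⟩
        exact ⟨le_antisymm ((hgle _).trans_eq h1) (hg.nonneg _),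
               le_antisymm ((hgle _).trans_eq h2) (hg.nonneg _)⟩
      have hx₀g : x₀ ∈ {a : Fin n → ℤ | g (lat a) = 0 ∧ g (-lat a) = 0} :=
        ⟨le_antisymm ((hgle _).trans_eq hx₀) (hg.nonneg _), hgneg⟩
      have hx₀f : lat x₀ ∉ Submodule.span ℝ
          (lat '' {a : Fin n → ℤ | f (lat a) = 0 ∧ f (-lat a) = 0}) := by
        intro hmem
        have hv := (hf.vanish (by rintro x ⟨a, ha, rfl⟩; exact ha) _ hmem).2
        exact hx₀' hv
      have hmemg : lat x₀ ∈ Submodule.span ℝ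
          (lat '' {a : Fin n → ℤ | g (lat a) = 0 ∧ g (-lat a) = 0}) :=
        Submodule.subset_span ⟨x₀, hx₀g, rfl⟩
      have hlt : Submodule.span ℝ
            (lat '' {a : Fin n → ℤ | f (lat a) = 0 ∧ f (-lat a) = 0}) <
          Submodule.span ℝ
            (lat '' {a : Fin n → ℤ | g (lat a) = 0 ∧ g (-lat a) = 0}) := by
        refine (Submodule.span_mono (Set.image_mono hW)).lt_of_ne fun he => ?_
        exact hx₀f (by rw [he]; exact hmemg)
      have hrk := Submodule.finrank_lt_finrank_of_lt hlt
      rcases ih g hg (by omega) with h | ⟨ψ, h1, h2⟩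
      · exact Or.inl h
      · exact Or.inr ⟨ψ, h1, fun x => (h2 x).trans (hgle x)⟩
    · push_neg at hex
      exact hf.terminal hex

end DBV

/-- If a semi-norm `N` takes integer values on the lattice `ℤ^{2g}` with parity
given by `⟨ε, a⟩` for a fixed `ε ∈ {0,1}^{2g}`, then any two lattice vertices of
its dual unit ball are congruent mod 2. -/
theorem dual_ball_vertices_congruent_mod_two
    (g : ℕ) (N : (Fin (2 * g) → ℝ) → ℝ)
    (hnn : ∀ x, 0 ≤ N x)
    (hhom : ∀ (t : ℝ) (x : Fin (2 * g) → ℝ), N (t • x) = |t| * N x)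
    (hsub : ∀ x y, N (x + y) ≤ N x + N y)
    (ε : Fin (2 * g) → ℤ) (hε : ∀ i, ε i = 0 ∨ ε i = 1)
    (hpar : ∀ a : Fin (2 * g) → ℤ, ∃ m : ℤ,
      N (fun i => (a i : ℝ)) = (m : ℝ) ∧ m % 2 = (∑ i, ε i * a i) % 2)
    (B : Set (Fin (2 * g) → ℝ))
    (hB : B = {φ | ∀ x, ∑ i, φ i * x i ≤ N x})
    (u v : Fin (2 * g) → ℤ)
    (hu : (fun i => (u i : ℝ)) ∈ Set.extremePoints ℝ B)
    (hv : (fun i => (v i : ℝ)) ∈ Set.extremePoints ℝ B) :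
    ∀ i, 2 ∣ (u i - v i) := by
  classical
  have main : ∀ w : Fin (2*g) → ℤ, (fun i => (w i : ℝ)) ∈ Set.extremePoints ℝ B →
      ∀ j, (ε j - w j) % 2 = 0 := by
    intro w hw
    have hwB : (fun i => (w i : ℝ)) ∈ B := hw.1
    have hwBle : ∀ x, (∑ k, (w k : ℝ) * x k) ≤ N x := by
      rw [hB] at hwB
      exact hwB
    set δ : Fin (2*g) → ℤ := fun k => (ε k - w k) % 2 with hδ
    set f : (Fin (2*g) → ℝ) → ℝ := fun x => N x - ∑ k, (w k : ℝ) * x k with hfdef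
    have hGood : DBV.Good (2*g) δ f := by
      constructor
      · intro x y
        simp only [hfdef]
        have hs : ∑ k, (w k : ℝ) * (x + y) k
            = (∑ k, (w k : ℝ) * x k) + ∑ k, (w k : ℝ) * y k := by
          rw [← Finset.sum_add_distrib]
          exact Finset.sum_congr rfl fun k _ => by simp [mul_add]
        have := hsub x y
        rw [hs]
        linarith
      · intro t ht x
        simp only [hfdef]
        rw [hhom t x, abs_of_nonneg ht]
        have hs : ∑ k, (w k : ℝ) * (t • x) k = t * ∑ k, (w k : ℝ) * x k := by
          rw [Finset.mul_sum]
          exact Finset.sum_congr rfl fun k _ => by simp [Pi.smul_apply]; ring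
        rw [hs]
        ring
      · intro x
        simp only [hfdef]
        have := hwBle x
        linarith
      · intro a
        obtain ⟨m, hm, hmp⟩ := hpar a
        refine ⟨m - ∑ k, w k * a k, ?_, ?_⟩
        · have hm' : N (DBV.lat a) = (m:ℝ) := hm
          simp only [hfdef]
          rw [hm']
          simp only [DBV.lat]
          push_cast
          ring
        · have hterm : ∀ k, (δ k * a k) % 2 = ((ε k - w k) * a k) % 2 := by
            intro k
            simp only [hδ]
            conv_lhs => rw [Int.mul_emod]
            conv_rhs => rw [Int.mul_emod]
            rw [Int.emod_emod_of_dvd _ dvd_rfl]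
          have hsum1 : (∑ k, δ k * a k) % 2 = (∑ k, (ε k - w k) * a k) % 2 := by
            rw [Finset.sum_int_mod]
            conv_rhs => rw [Finset.sum_int_mod]
            congr 1
            exact Finset.sum_congr rfl fun k _ => hterm k
          have hsum2 : (∑ k, (ε k - w k) * a k) = (∑ k, ε k * a k) - ∑ k, w k * a k := by
            rw [← Finset.sum_sub_distrib]
            exact Finset.sum_congr rfl fun k _ => by ring
          rw [hsum1, hsum2]
          omega
    have hrank := DBV.key δ (2*g) f hGood (by omega)
    rcases hrank with h | ⟨ψ, hψ0, hψ⟩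
    · intro j
      have := h j
      simp only [hδ] at this
      omega
    · exfalso
      set z : Fin (2*g) → ℝ := fun i => (w i : ℝ) with hz
      have hmem : ∀ (σ : ℝ), σ = 1 ∨ σ = -1 → z + σ • ψ ∈ B := by
        intro σ hσ
        rw [hB]
        intro x
        have h1 : ∑ k, (z + σ • ψ) k * x k
            = (∑ k, (w k : ℝ) * x k) + σ * ∑ k, ψ k * x k := by
          rw [Finset.mul_sum, ← Finset.sum_add_distrib]
          refine Finset.sum_congr rfl fun k _ => ?_
          simp only [Pi.add_apply, Pi.smul_apply, smul_eq_mul, hz]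
          ring
        rw [h1]
        have h2 := hψ x
        have h3 : σ * ∑ k, ψ k * x k ≤ |∑ k, ψ k * x k| := by
          rcases hσ with h | h <;> rw [h]
          · rw [one_mul]; exact le_abs_self _
          · rw [neg_one_mul]; exact neg_le_abs _
        have h4 : f x = N x - ∑ k, (w k : ℝ) * x k := rfl
        have := abs_le.1 h2
        simp only [hfdef] at this
        linarith [h3]
      have hx₁ : z + (-1:ℝ) • ψ ∈ B := hmem (-1) (Or.inr rfl)
      have hx₂ : z + (1:ℝ) • ψ ∈ B := hmem 1 (Or.inl rfl)
      have hseg : z ∈ openSegment ℝ (z + (-1:ℝ) • ψ) (z + (1:ℝ) • ψ) := by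
        refine ⟨1/2, 1/2, by norm_num, by norm_num, by norm_num, ?_⟩
        funext k
        simp only [Pi.add_apply, Pi.smul_apply, smul_eq_mul]
        ring
      have := hw.2 hx₁ hx₂ hseg
      have h5 : z + (-1:ℝ) • ψ = z := this
      have h6 : ψ = 0 := by
        funext k
        have := congrFun h5 k
        simp only [Pi.add_apply, Pi.smul_apply, smul_eq_mul] at this
        simpa using by linarith [this]
      exact hψ0 h6
  intro i
  have h1 := main u hu i
  have h2 := main v hv i
  omega
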